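/- Let F be a family of proper arcs. If an arc u is anticlockwise adjacent to an arc v, then every arc w of F whose right endpoint is encountered after the right endpoint of u and before the right endpoint of v when traversing clockwise from r(u) is also anticlockwise adjacent to v. -/

import Mathlib

open SimpleGraph
open scoped Classical

instance : Fact ((0:ℝ) < 1) := ⟨one_pos⟩

/-- An arc on the unit circle `AddCircle 1`, described by its left endpoint (the first
endpoint met anticlockwise from an interior point) and its (clockwise) length.
Since `0 < len < 1`, an arc is neither a single point nor the whole circle. -/
structure CArc where
  left : AddCircle (1:ℝ)
  len : ℝ
  len_pos : 0 < len
  len_lt_one : len < 1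

namespace CArc

/-- The set of points of the arc: going clockwise from the left endpoint for `len`. -/
def pts (a : CArc) : Set (AddCircle (1:ℝ)) :=
  {q | ∃ t : ℝ, 0 ≤ t ∧ t ≤ a.len ∧ q = a.left + (t : AddCircle (1:ℝ))}

/-- The right endpoint of an arc. -/
noncomputable def right (a : CArc) : AddCircle (1:ℝ) := a.left + ((a.len : ℝ) : AddCircle (1:ℝ))

end CArc

/-- A family of arcs on the circle: a finite set of arcs with all endpoints distinct. -/
structure ArcFamily where
  arcs : Finset CArc
  endpoints_distinct :
    ∀ a ∈ arcs, ∀ b ∈ arcs, a ≠ b →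
      a.left ≠ b.left ∧ a.left ≠ b.right ∧ a.right ≠ b.left ∧ a.right ≠ b.right

namespace ArcFamily

/-- A family of arcs is proper if no arc is properly contained in another. -/
def IsProper (F : ArcFamily) : Prop :=
  ∀ a ∈ F.arcs, ∀ b ∈ F.arcs, ¬ a.pts ⊂ b.pts

/-- The overlap set of a point `p`: all arcs of the family containing `p`. -/
noncomputable def overlap (F : ArcFamily) (p : AddCircle (1:ℝ)) : Finset CArc :=
  F.arcs.filter fun a => p ∈ a.pts

/-- `r_sup`: the maximum cardinality of an overlap set. -/
noncomputable def rsup (F : ArcFamily) : ℕ :=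
  sSup {n | ∃ p, (F.overlap p).card = n}

/-- `r_inf`: the minimum cardinality of an overlap set. -/
noncomputable def rinf (F : ArcFamily) : ℕ :=
  sInf {n | ∃ p, (F.overlap p).card = n}

/-- The circular arc graph of a family: vertices are the arcs, two distinct arcs are
adjacent iff they intersect. -/
def graph (F : ArcFamily) : SimpleGraph {a : CArc // a ∈ F.arcs} where
  Adj u v := u ≠ v ∧ (u.1.pts ∩ v.1.pts).Nonempty
  symm := ⟨by rintro u v ⟨h, q, h1, h2⟩; exact ⟨h.symm, q, h2, h1⟩⟩
  loopless := ⟨by rintro u ⟨h, -⟩; exact h rfl⟩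

/-- `F.CwAdj u v` : the arc `v` is clockwise adjacent to the arc `u`,
i.e. `v ≠ u` and `v ∈ O(r(u))`. -/
def CwAdj (F : ArcFamily) (u v : CArc) : Prop :=
  v ≠ u ∧ v ∈ F.overlap u.right

/-- `F.AcwAdj u v` : the arc `v` is anticlockwise adjacent to the arc `u`,
i.e. `v ≠ u` and `v ∈ O(l(u))`. -/
def AcwAdj (F : ArcFamily) (u v : CArc) : Prop :=
  v ≠ u ∧ v ∈ F.overlap u.left

end ArcFamily

/-- `G` has a complete minor on `m` vertices: there are `m` pairwise disjoint connected
branch sets with an edge of `G` between any two of them. -/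
def HasKMinor {V : Type*} (G : SimpleGraph V) (m : ℕ) : Prop :=
  ∃ B : Fin m → Set V,
    (∀ i, (G.induce (B i)).Connected) ∧
    (Pairwise fun i j => Disjoint (B i) (B j)) ∧
    (Pairwise fun i j => ∃ u ∈ B i, ∃ v ∈ B j, G.Adj u v)

/-- A graph is a proper circular arc graph if it is isomorphic to the circular arc graph
of some proper family of arcs. -/
def IsProperCircularArcGraph {V : Type*} (G : SimpleGraph V) : Prop :=
  ∃ F : ArcFamily, F.IsProper ∧ Nonempty (G ≃g F.graph)

/-- The clockwise angular distance from `p` to `q`: the unique `t ∈ [0,1)`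
with `q = p + t`.  Points are "encountered" in clockwise order of this quantity
when traversing clockwise from `p`. -/
noncomputable def angFrom (p q : AddCircle (1:ℝ)) : ℝ :=
  ((AddCircle.equivIco (1:ℝ) 0) (q - p) : ℝ)


section ArcHelpers

lemma angFrom_mem (p q : AddCircle (1:ℝ)) : angFrom p q ∈ Set.Ico (0:ℝ) 1 := by
  have h := (AddCircle.equivIco (1:ℝ) 0 (q - p)).2
  exact ⟨h.1, lt_of_lt_of_eq h.2 (zero_add 1)⟩

lemma coe_angFrom (p q : AddCircle (1:ℝ)) :
    ((angFrom p q : ℝ) : AddCircle (1:ℝ)) = q - p :=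
  (AddCircle.equivIco (1:ℝ) 0).symm_apply_apply (q - p)

lemma add_angFrom (p q : AddCircle (1:ℝ)) :
    p + ((angFrom p q : ℝ) : AddCircle (1:ℝ)) = q := by
  rw [coe_angFrom]; abel

lemma angFrom_add (p : AddCircle (1:ℝ)) (x : ℝ) :
    angFrom p (p + (x : ℝ)) = Int.fract x := by
  unfold angFrom
  rw [add_sub_cancel_left,
    show ((x:ℝ) : AddCircle (1:ℝ)) = QuotientAddGroup.mk x from rfl,
    AddCircle.coe_equivIco_mk_apply]
  simp

lemma angFrom_add_of (p : AddCircle (1:ℝ)) {x : ℝ} (h0 : 0 ≤ x) (h1 : x < 1) :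
    angFrom p (p + (x : ℝ)) = x := by
  rw [angFrom_add, Int.fract_eq_self.mpr ⟨h0, h1⟩]

lemma mem_pts_iff (a : CArc) (q : AddCircle (1:ℝ)) :
    q ∈ a.pts ↔ angFrom a.left q ≤ a.len := by
  constructor
  · rintro ⟨t, ht0, ht1, rfl⟩
    rw [angFrom_add_of a.left ht0 (ht1.trans_lt a.len_lt_one)]
    exact ht1
  · intro h
    exact ⟨angFrom a.left q, (angFrom_mem _ _).1, h, (add_angFrom _ _).symm⟩

lemma pts_subset (a b : CArc) (s : ℝ) (h0 : 0 ≤ s) (hle : s + a.len ≤ b.len)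
    (h : a.left = b.left + ((s : ℝ) : AddCircle (1:ℝ))) : a.pts ⊆ b.pts := by
  rintro q ⟨t, ht0, ht1, rfl⟩
  refine ⟨s + t, by linarith, by linarith, ?_⟩
  rw [h, AddCircle.coe_add, add_assoc]

end ArcHelpers

/-- In a family of proper arcs, if an arc `u` is anticlockwise adjacent to
an arc `v`, then every arc `w` of `F` whose right endpoint is encountered after `r(u)`
and before `r(v)` when traversing clockwise from `r(u)` is also anticlockwise adjacent
to `v`. -/
theorem acw_adjacent_between (F : ArcFamily) (hF : F.IsProper)
    (u v w : CArc) (hu : u ∈ F.arcs) (hv : v ∈ F.arcs) (hw : w ∈ F.arcs)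
    (huv : F.AcwAdj v u)
    (h1 : 0 < angFrom u.right w.right)
    (h2 : angFrom u.right w.right < angFrom u.right v.right) :
    F.AcwAdj v w := by
  obtain ⟨hune, humem⟩ := huv
  have huvl : v.left ∈ u.pts := (Finset.mem_filter.mp humem).2
  obtain ⟨s₀, hs₀⟩ : ∃ s, s = angFrom u.left v.left := ⟨_, rfl⟩
  have hvl : v.left = u.left + ((s₀ : ℝ) : AddCircle (1:ℝ)) := by
    rw [hs₀]; exact (add_angFrom _ _).symm
  have hs₀0 : 0 ≤ s₀ := hs₀ ▸ (angFrom_mem _ _).1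
  have hs₀le : s₀ ≤ u.len := hs₀ ▸ (mem_pts_iff u v.left).mp huvl
  obtain ⟨d, hd⟩ : ∃ d, d = u.len - s₀ := ⟨_, rfl⟩
  have hulp := u.len_pos
  have hul1 := u.len_lt_one
  have hvlp := v.len_pos
  have hvl1 := v.len_lt_one
  have hwlp := w.len_pos
  have hwl1 := w.len_lt_one
  have hd0 : 0 ≤ d := by rw [hd]; linarith
  have hd1 : d < 1 := by rw [hd]; linarith
  have hur : u.right = v.left + ((d : ℝ) : AddCircle (1:ℝ)) := by
    rw [CArc.right, hvl, add_assoc, ← AddCircle.coe_add,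
      show s₀ + d = u.len by rw [hd]; ring]
  have hdistinct := F.endpoints_distinct u hu v hv hune
  have hdpos : 0 < d := by
    rcases lt_or_eq_of_le hd0 with h | h
    · exact h
    · exfalso
      apply hdistinct.2.2.1
      rw [hur, ← h]
      simp
  have havlur : angFrom v.left u.right = d := by
    rw [hur, angFrom_add_of _ hd0 hd1]
  obtain ⟨c, hc⟩ : ∃ c, c = angFrom u.right w.right := ⟨_, rfl⟩
  rw [← hc] at h1 h2
  have hwr : w.right = u.right + ((c : ℝ) : AddCircle (1:ℝ)) := by
    rw [hc]; exact (add_angFrom _ _).symm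
  have hc1 : c < 1 := hc ▸ (angFrom_mem u.right w.right).2
  -- rule out d ≥ v.len
  have hdlt : d < v.len := by
    rcases lt_trichotomy d v.len with h | h | h
    · exact h
    · exact absurd (by rw [hur, h, CArc.right]) hdistinct.2.2.2
    · exfalso
      apply hF v hv u hu
      constructor
      · exact pts_subset v u s₀ hs₀0 (by rw [hd] at h; linarith) hvl
      · intro hsub
        have h1' : u.right ∈ u.pts := ⟨u.len, le_of_lt u.len_pos, le_refl _, rfl⟩
        have h2' := hsub h1'
        rw [mem_pts_iff, havlur] at h2'
        linarith
  have havr : angFrom u.right v.right = v.len - d := by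
    have hvr : v.right = u.right + (((v.len - d : ℝ)) : AddCircle (1:ℝ)) := by
      rw [hur, CArc.right, add_assoc, ← AddCircle.coe_add,
        show d + (v.len - d) = v.len by ring]
    rw [hvr, angFrom_add_of _ (by linarith) (by linarith)]
  have hclt : c < v.len - d := by rw [← havr]; exact h2
  have hwv : w ≠ v := by
    intro h
    rw [h] at hc
    rw [← hc] at h2
    exact lt_irrefl c h2
  have hwr' : w.right = v.left + (((d + c : ℝ)) : AddCircle (1:ℝ)) := by
    rw [hwr, hur, add_assoc, ← AddCircle.coe_add]
  -- rule out w.len < d + c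
  have hwlen : d + c ≤ w.len := by
    by_contra hbad
    push_neg at hbad
    have hwl : w.left = v.left + (((d + c - w.len : ℝ)) : AddCircle (1:ℝ)) := by
      have key : w.left + ((w.len : ℝ) : AddCircle (1:ℝ))
          = v.left + (((d + c - w.len : ℝ)) : AddCircle (1:ℝ))
            + ((w.len : ℝ) : AddCircle (1:ℝ)) := by
        rw [← CArc.right, hwr', add_assoc, ← AddCircle.coe_add,
          show d + c - w.len + w.len = d + c by ring]
      exact add_right_cancel key
    apply hF w hw v hv
    constructor
    · exact pts_subset w v (d + c - w.len) (by linarith) (by linarith) hwl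
    · intro hsub
      have hvv : v.left ∈ v.pts := ⟨0, le_refl _, le_of_lt v.len_pos, by simp⟩
      have h2' := hsub hvv
      rw [mem_pts_iff] at h2'
      have hx0 : (0:ℝ) < 1 - (d + c - w.len) := by linarith
      have hx1 : 1 - (d + c - w.len) < 1 := by linarith
      have hvl' : v.left = w.left + (((1 - (d + c - w.len) : ℝ)) : AddCircle (1:ℝ)) := by
        have key : w.left + (((1 - (d + c - w.len) : ℝ)) : AddCircle (1:ℝ))
            + (((d + c - w.len : ℝ)) : AddCircle (1:ℝ))
            = v.left + (((d + c - w.len : ℝ)) : AddCircle (1:ℝ)) := by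
          rw [add_assoc, ← AddCircle.coe_add,
            show 1 - (d + c - w.len) + (d + c - w.len) = (1:ℝ) by ring,
            AddCircle.coe_period, add_zero, hwl]
        exact (add_right_cancel key).symm
      rw [hvl', angFrom_add_of _ (le_of_lt hx0) hx1] at h2'
      linarith
  -- conclude
  refine ⟨hwv, Finset.mem_filter.mpr ⟨hw, ?_⟩⟩
  refine ⟨w.len - (d + c), by linarith, by linarith, ?_⟩
  have key : w.left + (((w.len - (d + c) : ℝ)) : AddCircle (1:ℝ))
      + (((d + c : ℝ)) : AddCircle (1:ℝ)) = v.left + (((d + c : ℝ)) : AddCircle (1:ℝ)) := by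
    rw [add_assoc, ← AddCircle.coe_add,
      show w.len - (d + c) + (d + c) = w.len by ring, ← CArc.right, hwr']
  exact (add_right_cancel key).symm
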